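/- Let N, m ≥ 1 and let R and R' be A_N-submodules of the free module A_N^{⊕m}. Then there exists an A_N-module automorphism g of A_N^{⊕m} with g(R) = R' if and only if R and R' are isomorphic as A_N-modules. -/

import Mathlib

set_option synthInstance.maxHeartbeats 1000000
set_option maxHeartbeats 1000000

open Polynomial

/-- The truncated polynomial ring `A_N = ℂ[t]/(t^N)`. -/
abbrev AN (N : ℕ) : Type := Polynomial ℂ ⧸ Ideal.span {(X : Polynomial ℂ) ^ N}

noncomputable section S16
namespace S16
variable (N m : ℕ)
abbrev PC : Type := Polynomial ℂ
abbrev Mt (m : ℕ) : Type := Fin m → PC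
abbrev Mq (N m : ℕ) : Type := Fin m → AN N
def pr : Mt m →ₗ[PC] Mq N m :=
  LinearMap.pi fun i => (Algebra.linearMap PC (AN N)).comp (LinearMap.proj i)
lemma pr_apply (x : Mt m) (i : Fin m) :
    pr N m x i = Ideal.Quotient.mk (Ideal.span {(X : PC) ^ N}) (x i) := by
  simp [pr, Algebra.linearMap, Ideal.Quotient.algebraMap_eq]
lemma pr_surjective : Function.Surjective (pr N m) := by
  intro y
  refine ⟨fun i => (Ideal.Quotient.mk_surjective (y i)).choose, ?_⟩
  ext i
  rw [pr_apply]
  exact (Ideal.Quotient.mk_surjective (y i)).choose_spec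
lemma pr_eq_zero_iff (x : Mt m) : pr N m x = 0 ↔ ∀ i, (X : PC) ^ N ∣ x i := by
  simp only [funext_iff, Pi.zero_apply, pr_apply, Ideal.Quotient.eq_zero_iff_mem,
    Ideal.mem_span_singleton]
def tpow (j : ℕ) : AN N := Ideal.Quotient.mk _ ((X : PC) ^ j)
lemma tpow_smul (j : ℕ) (y : Mq N m) : tpow N j • y = ((X : PC) ^ j) • y := by
  rw [tpow, ← Ideal.Quotient.algebraMap_eq, IsScalarTower.algebraMap_smul]
lemma pr_comm_smul (j : ℕ) (x : Mt m) :
    pr N m (((X : PC) ^ j) • x) = tpow N j • pr N m x := by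
  rw [map_smul, tpow_smul]

-- chunk 2
lemma ker_pr_eq : LinearMap.ker (pr N m) =
    Submodule.map (LinearMap.lsmul PC (Mt m) ((X : PC) ^ N)) ⊤ := by
  ext x
  simp only [LinearMap.mem_ker, pr_eq_zero_iff, Submodule.mem_map, Submodule.mem_top,
    true_and, LinearMap.lsmul_apply]
  constructor
  · intro h
    refine ⟨fun i => (h i).choose, funext fun i => ?_⟩
    simp only [Pi.smul_apply, smul_eq_mul]
    exact ((h i).choose_spec).symm
  · rintro ⟨y, rfl⟩ i
    exact ⟨y i, rfl⟩

lemma smul_top_le_comap (R : Submodule (AN N) (Mq N m)) :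
    LinearMap.ker (pr N m) ≤ Submodule.comap (pr N m) (R.restrictScalars PC) := by
  intro x hx
  simp only [Submodule.mem_comap, LinearMap.mem_ker.mp hx, Submodule.restrictScalars_mem]
  exact R.zero_mem

lemma finrank_ker_pr : Module.finrank PC ↥(LinearMap.ker (pr N m)) = m := by
  have hinj : Function.Injective (LinearMap.lsmul PC (Mt m) ((X : PC) ^ N)) := by
    intro x y hxy
    funext i
    have := congrFun hxy i
    simp only [LinearMap.lsmul_apply, Pi.smul_apply, smul_eq_mul] at this
    exact mul_left_cancel₀ (pow_ne_zero _ X_ne_zero) this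
  have e1 := LinearEquiv.ofInjective _ hinj
  rw [ker_pr_eq, ← LinearMap.range_eq_map]
  rw [← LinearEquiv.finrank_eq e1]
  simp [Module.finrank_pi]

lemma exists_smith (R : Submodule (AN N) (Mq N m)) :
    ∃ (b : Module.Basis (Fin m) PC (Mt m)) (v : Fin m → ℕ), (∀ i, v i ≤ N) ∧
      Submodule.comap (pr N m) (R.restrictScalars PC) =
        Submodule.span PC (Set.range fun i => (X : PC) ^ (v i) • b i) := by
  classical
  set Rt := Submodule.comap (pr N m) (R.restrictScalars PC) with hRt
  obtain ⟨n, snf⟩ := Rt.smithNormalForm (Pi.basisFun PC (Fin m))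
  obtain ⟨bM, bN, f, a, hsnf⟩ := snf
  -- n = m
  have hfin : Module.Finite PC ↥Rt := Module.Finite.of_basis bN
  have hnm : n ≤ m := by
    simpa using Fintype.card_le_of_embedding f
  have hmn : m ≤ n := by
    have h1 : Module.finrank PC ↥Rt = n := by
      rw [Module.finrank_eq_card_basis bN, Fintype.card_fin]
    have h2 : Module.finrank PC ↥(LinearMap.ker (pr N m)) ≤ Module.finrank PC ↥Rt :=
      LinearMap.finrank_le_finrank_of_injective
        (f := Submodule.inclusion (smul_top_le_comap N m R))
        (Submodule.inclusion_injective _)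
    rw [finrank_ker_pr, h1] at h2
    exact h2
  have hbij : Function.Bijective f :=
    (Fintype.bijective_iff_injective_and_card f).2 ⟨f.injective, by simp [le_antisymm hnm hmn]⟩
  set e := Equiv.ofBijective f hbij with he
  set A : Fin m → PC := fun i => a (e.symm i) with hA
  have hRt_span : Rt = Submodule.span PC (Set.range fun i => A i • bM i) := by
    have hB : ∀ i : Fin m, ((bN.reindex e) i : Mt m) = A i • bM i := by
      intro i
      rw [Module.Basis.reindex_apply, hsnf]
      congr 2
      exact e.apply_symm_apply i
    calc Rt = Submodule.map Rt.subtype ⊤ := by simp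
    _ = Submodule.map Rt.subtype (Submodule.span PC (Set.range (bN.reindex e))) := by
        rw [Module.Basis.span_eq]
    _ = Submodule.span PC (Rt.subtype '' Set.range (bN.reindex e)) := by
        rw [Submodule.map_span]
    _ = Submodule.span PC (Set.range fun i => A i • bM i) := by
        rw [← Set.range_comp]
        congr 1
        ext x
        constructor
        · rintro ⟨i, rfl⟩; exact ⟨i, (hB i).symm⟩
        · rintro ⟨i, rfl⟩; exact ⟨i, hB i⟩
  -- each A i divides X^N
  have hdvd : ∀ i, A i ∣ (X : PC) ^ N := by
    intro i
    have hmem : ((X : PC) ^ N) • bM i ∈ Rt := by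
      apply smul_top_le_comap N m R
      rw [LinearMap.mem_ker, pr_eq_zero_iff]
      intro j
      exact ⟨bM i j, by simp⟩
    rw [hRt_span] at hmem
    rw [Submodule.mem_span_range_iff_exists_fun] at hmem
    obtain ⟨g, hg⟩ := hmem
    have h2 := congrArg (fun z => bM.repr z i) hg
    simp only [map_sum, map_smul, Module.Basis.repr_self, Finset.sum_apply', Finsupp.smul_apply,
      Finsupp.single_apply, smul_eq_mul, mul_ite, mul_one, mul_zero, Finset.sum_ite_eq',
      Finset.mem_univ, if_true] at h2
    exact ⟨g i, by rw [← h2]; ring⟩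
  -- extract powers
  have hassoc : ∀ i, ∃ v : ℕ, v ≤ N ∧ Associated (A i) ((X : PC) ^ v) := by
    intro i
    obtain ⟨v, hv, hass⟩ := (dvd_prime_pow prime_X N).1 (hdvd i)
    exact ⟨v, hv, hass⟩
  choose v hvN hass using hassoc
  refine ⟨bM, v, hvN, ?_⟩
  rw [hRt_span]
  apply le_antisymm <;> rw [Submodule.span_le] <;> rintro x ⟨i, rfl⟩ <;>
    simp only [SetLike.mem_coe]
  · obtain ⟨u, hu⟩ := hass i
    have h5 : A i • bM i = ((u⁻¹ : PCˣ) : PC) • ((X : PC) ^ (v i) • bM i) := by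
      rw [smul_smul, ← hu]
      rw [mul_comm ((u⁻¹ : PCˣ) : PC), mul_assoc]
      simp
    show A i • bM i ∈ _
    rw [h5]
    exact Submodule.smul_mem _ _ (Submodule.subset_span ⟨i, rfl⟩)
  · obtain ⟨u, hu⟩ := hass i
    have h5 : (X : PC) ^ (v i) • bM i = (u : PC) • (A i • bM i) := by
      rw [smul_smul, mul_comm, hu]
    show (X : PC) ^ (v i) • bM i ∈ _
    rw [h5]
    exact Submodule.smul_mem _ _ (Submodule.subset_span ⟨i, rfl⟩)

-- chunk 3 : dimension counting
lemma mem_ker_pr_iff_repr (b : Module.Basis (Fin m) PC (Mt m)) (x : Mt m) :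
    pr N m x = 0 ↔ ∀ i, (X : PC) ^ N ∣ b.repr x i := by
  constructor
  · intro h i
    have hx : x ∈ LinearMap.ker (pr N m) := h
    rw [ker_pr_eq] at hx
    obtain ⟨y, -, rfl⟩ := hx
    exact ⟨b.repr y i, by simp⟩
  · intro h
    choose hcoef hspec using h
    have hx : x = ((X : PC) ^ N) • (∑ i, hcoef i • b i) := by
      conv_lhs => rw [← b.sum_repr x]
      rw [Finset.smul_sum]
      refine Finset.sum_congr rfl fun i _ => ?_
      rw [smul_smul, ← hspec i]
    rw [hx, pr_eq_zero_iff]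
    intro j
    exact ⟨(∑ i, hcoef i • b i) j, by simp⟩

lemma dvd_mul_pow_iff (c : ℕ) (g : PC) :
    (X : PC) ^ N ∣ g * (X : PC) ^ c ↔ (X : PC) ^ (N - c) ∣ g := by
  rcases le_or_gt N c with h | h
  · rw [Nat.sub_eq_zero_of_le h, pow_zero]
    simp only [one_dvd, iff_true]
    exact dvd_mul_of_dvd_right (pow_dvd_pow X h) g
  · have hX : (X : PC) ^ N = (X : PC) ^ (N - c) * (X : PC) ^ c := by
      rw [← pow_add]; congr 1; omega
    rw [hX, mul_dvd_mul_iff_right (pow_ne_zero c X_ne_zero)]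

lemma finrank_quot_pow (k : ℕ) :
    Module.finrank ℂ (PC ⧸ (Ideal.span {(X : PC) ^ k} : Ideal PC)) = k := by
  have hf : ((X : PC) ^ k) ≠ 0 := pow_ne_zero _ X_ne_zero
  have := (AdjoinRoot.powerBasis hf).finrank
  exact this.trans (by simp [natDegree_pow])

lemma repr_sum_smul (b : Module.Basis (Fin m) PC (Mt m)) (c : Fin m → ℕ) (g : Fin m → PC)
    (k : Fin m) :
    b.repr (∑ i, g i • ((X : PC) ^ (c i) • b i)) k = g k * (X : PC) ^ (c k) := by
  simp only [map_sum, map_smul, Module.Basis.repr_self, Finset.sum_apply', Finsupp.smul_apply,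
    Finsupp.single_apply, smul_eq_mul, mul_ite, mul_one, mul_zero, Finset.sum_ite_eq',
    Finset.mem_univ, if_true]

lemma finite_quot_pow (k : ℕ) :
    Module.Finite ℂ (PC ⧸ (Ideal.span {(X : PC) ^ k} : Ideal PC)) :=
  Module.Finite.of_basis (AdjoinRoot.powerBasis (f := (X : PC) ^ k)
    (pow_ne_zero _ X_ne_zero)).basis

lemma finrank_map_pr_span (b : Module.Basis (Fin m) PC (Mt m)) (c : Fin m → ℕ) :
    Module.finrank ℂ
      ↥(Submodule.map (pr N m)
        (Submodule.span PC (Set.range fun i => (X : PC) ^ (c i) • b i))) =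
      ∑ i, (N - c i) := by
  classical
  set w : Fin m → Mt m := fun i => (X : PC) ^ (c i) • b i with hw
  set θ : (Fin m → PC) →ₗ[PC] Mq N m := (pr N m) ∘ₗ (Fintype.linearCombination PC w) with hθ
  have hrange : LinearMap.range θ =
      Submodule.map (pr N m) (Submodule.span PC (Set.range w)) := by
    rw [hθ, LinearMap.range_comp, Fintype.range_linearCombination]
  have hker : LinearMap.ker θ =
      Submodule.pi Set.univ (fun i => (Ideal.span {(X : PC) ^ (N - c i)} : Ideal PC)) := by
    ext g
    rw [LinearMap.mem_ker, hθ, LinearMap.comp_apply]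
    rw [show (Fintype.linearCombination PC w) g = ∑ i, g i • w i from
      Fintype.linearCombination_apply _ _ _]
    rw [mem_ker_pr_iff_repr N m b]
    simp only [hw]
    rw [Submodule.mem_pi]
    constructor
    · intro h i _
      have := h i
      rw [repr_sum_smul, dvd_mul_pow_iff] at this
      rwa [Ideal.mem_span_singleton]
    · intro h i
      rw [repr_sum_smul, dvd_mul_pow_iff]
      have := h i (Set.mem_univ i)
      rwa [Ideal.mem_span_singleton] at this
  have e1 := θ.quotKerEquivRange
  rw [hrange, hker] at e1
  have e2 := Submodule.quotientPi (R := PC) (ι := Fin m) (Ms := fun _ => PC)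
      (fun i => (Ideal.span {(X : PC) ^ (N - c i)} : Ideal PC))
  have e3 := (e2.symm.trans e1).restrictScalars ℂ
  rw [← LinearEquiv.finrank_eq e3]
  have hfr : ∀ i : Fin m, Module.finrank ℂ (PC ⧸ (Ideal.span {(X : PC) ^ (N - c i)} : Ideal PC))
      = N - c i := fun i => finrank_quot_pow (N - c i)
  haveI : ∀ i : Fin m, Module.Finite ℂ (PC ⧸ (Ideal.span {(X : PC) ^ (N - c i)} : Ideal PC)) :=
    fun i => finite_quot_pow (N - c i)
  rw [Module.finrank_pi_fintype ℂ]
  exact Finset.sum_congr rfl fun i _ => hfr i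

-- chunk 4 : the invariant dk
def carrierEquiv (S₁ : Submodule (AN N) (Mq N m)) (S₂ : Submodule PC (Mq N m))
    (h : ∀ x, x ∈ S₁ ↔ x ∈ S₂) : ↥S₁ ≃ₗ[ℂ] ↥S₂ where
  toFun x := ⟨x.1, (h x.1).1 x.2⟩
  invFun x := ⟨x.1, (h x.1).2 x.2⟩
  map_add' _ _ := rfl
  map_smul' _ _ := rfl
  left_inv _ := rfl
  right_inv _ := rfl

def dk (j : ℕ) (R : Submodule (AN N) (Mq N m)) : ℕ :=
  Module.finrank ℂ ↥(Submodule.map (LinearMap.lsmul (AN N) (Mq N m) (tpow N j)) R)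

lemma dk_formula (R : Submodule (AN N) (Mq N m)) (b : Module.Basis (Fin m) PC (Mt m))
    (v : Fin m → ℕ)
    (hspan : Submodule.comap (pr N m) (R.restrictScalars PC) =
      Submodule.span PC (Set.range fun i => (X : PC) ^ (v i) • b i)) (j : ℕ) :
    dk N m j R = ∑ i, (N - (v i + j)) := by
  have hW0 : Submodule.map (pr N m)
      (Submodule.span PC (Set.range fun i => (X : PC) ^ (v i) • b i)) =
      R.restrictScalars PC := by
    rw [← hspan]
    exact Submodule.map_comap_eq_of_surjective (pr_surjective N m) _
  have hcomm : (pr N m) ∘ₗ (LinearMap.lsmul PC (Mt m) ((X : PC) ^ j)) =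
      (LinearMap.lsmul PC (Mq N m) ((X : PC) ^ j)) ∘ₗ pr N m := by
    refine LinearMap.ext fun x => ?_
    simp only [LinearMap.comp_apply, LinearMap.lsmul_apply, map_smul]
  have hWj : Submodule.map (LinearMap.lsmul PC (Mt m) ((X : PC) ^ j))
      (Submodule.span PC (Set.range fun i => (X : PC) ^ (v i) • b i)) =
      Submodule.span PC (Set.range fun i => (X : PC) ^ (v i + j) • b i) := by
    rw [Submodule.map_span]
    congr 1
    rw [← Set.range_comp]
    refine congrArg _ (funext fun i => ?_)
    show (X : PC) ^ j • ((X : PC) ^ (v i) • b i) = (X : PC) ^ (v i + j) • b i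
    rw [smul_smul, ← pow_add, add_comm j (v i)]
  have hmap : Submodule.map (pr N m)
      (Submodule.span PC (Set.range fun i => (X : PC) ^ (v i + j) • b i)) =
      Submodule.map (LinearMap.lsmul PC (Mq N m) ((X : PC) ^ j))
        (R.restrictScalars PC) := by
    rw [← hWj, ← Submodule.map_comp, hcomm, Submodule.map_comp, hW0]
  have hset : ∀ x, x ∈ Submodule.map (LinearMap.lsmul (AN N) (Mq N m) (tpow N j)) R ↔
      x ∈ Submodule.map (pr N m)
        (Submodule.span PC (Set.range fun i => (X : PC) ^ (v i + j) • b i)) := by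
    intro x
    rw [hmap]
    simp only [Submodule.mem_map, LinearMap.lsmul_apply, Submodule.restrictScalars_mem]
    constructor
    · rintro ⟨r, hr, rfl⟩
      exact ⟨r, hr, by rw [← tpow_smul]⟩
    · rintro ⟨r, hr, rfl⟩
      exact ⟨r, hr, by rw [tpow_smul]⟩
  rw [dk, LinearEquiv.finrank_eq (carrierEquiv N m _ _ hset), finrank_map_pr_span]

lemma dk_eq_of_equiv (R R' : Submodule (AN N) (Mq N m)) (e : ↥R ≃ₗ[AN N] ↥R') (j : ℕ) :
    dk N m j R = dk N m j R' := by
  set L := LinearMap.lsmul (AN N) (Mq N m) (tpow N j) with hL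
  set α : ↥R →ₗ[AN N] Mq N m := L ∘ₗ R.subtype with hα
  set α' : ↥R' →ₗ[AN N] Mq N m := L ∘ₗ R'.subtype with hα'
  set β : ↥R →ₗ[AN N] Mq N m := α' ∘ₗ e.toLinearMap with hβ
  have hrα : LinearMap.range α = Submodule.map L R := by
    rw [hα, LinearMap.range_comp, Submodule.range_subtype]
  have hrα' : LinearMap.range α' = Submodule.map L R' := by
    rw [hα', LinearMap.range_comp, Submodule.range_subtype]
  have hrβ : LinearMap.range β = LinearMap.range α' := by
    rw [hβ, LinearMap.range_comp, LinearEquiv.range, Submodule.map_top]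
  have hker : LinearMap.ker α = LinearMap.ker β := by
    ext r
    simp only [LinearMap.mem_ker, hα, hβ, hα', LinearMap.comp_apply, LinearEquiv.coe_coe,
      hL, LinearMap.lsmul_apply, Submodule.coe_subtype]
    rw [show tpow N j • (r : Mq N m) = ((tpow N j • r : ↥R) : Mq N m) from rfl]
    rw [show tpow N j • ((e r : ↥R') : Mq N m) = ((tpow N j • e r : ↥R') : Mq N m) from rfl]
    rw [ZeroMemClass.coe_eq_zero, ZeroMemClass.coe_eq_zero, ← map_smul]
    exact ⟨fun h => by rw [h, map_zero], fun h => e.injective (by rw [h, map_zero])⟩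
  have e1 := α.quotKerEquivRange
  have e2 := β.quotKerEquivRange
  rw [hker] at e1
  have e3 := (e1.symm.trans e2).restrictScalars ℂ
  rw [dk, dk, ← hrα, ← hrα', ← hrβ]
  exact LinearEquiv.finrank_eq e3

-- chunk 5 : combinatorics
lemma sum_step (v : Fin m → ℕ) (j : ℕ) :
    ∑ i, (N - (v i + j)) =
      (∑ i, (N - (v i + (j + 1)))) + (Finset.univ.filter fun i => v i + j < N).card := by
  classical
  rw [Finset.card_filter, ← Finset.sum_add_distrib]
  refine Finset.sum_congr rfl fun i _ => ?_
  rcases lt_or_ge (v i + j) N with h | h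
  · rw [if_pos h]; omega
  · rw [if_neg (not_lt.2 h)]; omega

lemma count_lt_eq (v v' : Fin m → ℕ) (hv : ∀ i, v i ≤ N) (hv' : ∀ i, v' i ≤ N)
    (h : ∀ j, ∑ i, (N - (v i + j)) = ∑ i, (N - (v' i + j))) (c : ℕ) :
    (Finset.univ.filter fun i => v i < c).card =
      (Finset.univ.filter fun i => v' i < c).card := by
  classical
  have hcnt : ∀ j, (Finset.univ.filter fun i => v i + j < N).card =
      (Finset.univ.filter fun i => v' i + j < N).card := by
    intro j
    have h1 := h j
    have h2 := h (j + 1)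
    have s1 := sum_step N m v j
    have s2 := sum_step N m v' j
    omega
  rcases le_or_gt c N with hc | hc
  · have := hcnt (N - c)
    have hfe : ∀ w : Fin m → ℕ, (Finset.univ.filter fun i => w i + (N - c) < N) =
        (Finset.univ.filter fun i => w i < c) := by
      intro w
      refine Finset.filter_congr fun i _ => ?_
      constructor <;> intro hh <;> omega
    rwa [hfe v, hfe v'] at this
  · have hfa : ∀ w : Fin m → ℕ, (∀ i, w i ≤ N) →
        (Finset.univ.filter fun i => w i < c) = Finset.univ := by
      intro w hw
      refine Finset.filter_true_of_mem fun i _ => ?_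
      have := hw i; omega
    rw [hfa v hv, hfa v' hv']

lemma exists_perm_of_sums (v v' : Fin m → ℕ) (hv : ∀ i, v i ≤ N) (hv' : ∀ i, v' i ≤ N)
    (h : ∀ j, ∑ i, (N - (v i + j)) = ∑ i, (N - (v' i + j))) :
    ∃ σ : Equiv.Perm (Fin m), v = v' ∘ σ := by
  classical
  have hcard : ∀ a : ℕ, Fintype.card {i // (v ∘ Tuple.sort v) i ≤ a} =
      Fintype.card {i // (v' ∘ Tuple.sort v') i ≤ a} := by
    intro a
    have e1 : {i // (v ∘ Tuple.sort v) i ≤ a} ≃ {i // v i ≤ a} :=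
      Equiv.subtypeEquiv (Tuple.sort v) fun i => Iff.rfl
    have e2 : {i // (v' ∘ Tuple.sort v') i ≤ a} ≃ {i // v' i ≤ a} :=
      Equiv.subtypeEquiv (Tuple.sort v') fun i => Iff.rfl
    rw [Fintype.card_congr e1, Fintype.card_congr e2, Fintype.card_subtype,
      Fintype.card_subtype]
    have := count_lt_eq N m v v' hv hv' h (a + 1)
    simp only [Nat.lt_succ_iff] at this
    exact this
  simp only [Fintype.card_subtype] at hcard
  have hg : v ∘ Tuple.sort v = v' ∘ Tuple.sort v' := by
    funext j
    have h1 := fun a => Tuple.lt_card_le_iff_apply_le_of_monotone (f := v ∘ Tuple.sort v) (a := a)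
      (Tuple.monotone_sort v) (j := j)
    have h2 := fun a => Tuple.lt_card_le_iff_apply_le_of_monotone (f := v' ∘ Tuple.sort v') (a := a)
      (Tuple.monotone_sort v') (j := j)
    refine le_antisymm ?_ ?_
    · refine (h1 _).1 ?_
      rw [hcard]
      exact (h2 _).2 le_rfl
    · refine (h2 _).1 ?_
      rw [← hcard]
      exact (h1 _).2 le_rfl
  refine ⟨((Tuple.sort v).symm.trans (Tuple.sort v')), ?_⟩
  funext i
  have := congrFun hg ((Tuple.sort v).symm i)
  simpa using this

-- chunk 6 : descending an automorphism
def toAN (gP : Mq N m ≃ₗ[PC] Mq N m) : Mq N m ≃ₗ[AN N] Mq N m where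
  toFun := gP
  invFun := gP.symm
  left_inv := gP.left_inv
  right_inv := gP.right_inv
  map_add' := map_add gP
  map_smul' := by
    intro a x
    obtain ⟨p, rfl⟩ := Ideal.Quotient.mk_surjective a
    have hsm : ∀ y : Mq N m, (Ideal.Quotient.mk (Ideal.span {(X : PC) ^ N}) p) • y = p • y := by
      intro y
      rw [← Ideal.Quotient.algebraMap_eq, IsScalarTower.algebraMap_smul]
    simp only [RingHom.id_apply, hsm, map_smul]

lemma descend (φ : Mt m ≃ₗ[PC] Mt m)
    (hφ : Submodule.map (φ : Mt m →ₗ[PC] Mt m) (LinearMap.ker (pr N m)) =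
      LinearMap.ker (pr N m)) :
    ∃ g : Mq N m ≃ₗ[AN N] Mq N m, ∀ x, g (pr N m x) = pr N m (φ x) := by
  set e1 : (Mt m ⧸ LinearMap.ker (pr N m)) ≃ₗ[PC] Mq N m :=
    (pr N m).quotKerEquivOfSurjective (pr_surjective N m) with he1def
  have he1 : ∀ x, e1 (Submodule.Quotient.mk x) = pr N m x := by
    intro x
    simp [he1def, LinearMap.quotKerEquivOfSurjective]
  set q := Submodule.Quotient.equiv (LinearMap.ker (pr N m)) (LinearMap.ker (pr N m)) φ hφ
    with hq
  set gP := e1.symm.trans (q.trans e1) with hgP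
  have hcomm : ∀ x, gP (pr N m x) = pr N m (φ x) := by
    intro x
    rw [hgP]
    have h0 : e1.symm (pr N m x) = Submodule.Quotient.mk x := by
      rw [LinearEquiv.symm_apply_eq, he1]
    simp only [LinearEquiv.trans_apply, h0]
    have h1 : q (Submodule.Quotient.mk x) = Submodule.Quotient.mk (φ x) := by
      rw [hq]
      have hle : LinearMap.ker (pr N m) ≤
          Submodule.comap (φ : Mt m →ₗ[PC] Mt m) (LinearMap.ker (pr N m)) := by
        intro y hy
        rw [Submodule.mem_comap, ← hφ]
        exact Submodule.mem_map_of_mem hy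
      exact Submodule.mapQ_apply (p := LinearMap.ker (pr N m)) (q := LinearMap.ker (pr N m)) (φ : Mt m →ₗ[PC] Mt m) (h := hle) x
    rw [h1, he1]
  exact ⟨toAN N m gP, hcomm⟩

-- chunk 7 : main construction
lemma exists_g (R R' : Submodule (AN N) (Mq N m)) (e : ↥R ≃ₗ[AN N] ↥R') :
    ∃ g : Mq N m ≃ₗ[AN N] Mq N m,
      Submodule.map (g : Mq N m →ₗ[AN N] Mq N m) R = R' := by
  classical
  obtain ⟨b, v, hv, hspan⟩ := exists_smith N m R
  obtain ⟨b', v', hv', hspan'⟩ := exists_smith N m R'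
  have hsum : ∀ j, ∑ i, (N - (v i + j)) = ∑ i, (N - (v' i + j)) := by
    intro j
    rw [← dk_formula N m R b v hspan j, ← dk_formula N m R' b' v' hspan' j]
    exact dk_eq_of_equiv N m R R' e j
  obtain ⟨σ, hσ⟩ := exists_perm_of_sums N m v v' hv hv' hsum
  set φ := b.equiv b' σ with hφdef
  have hφw : ∀ i, φ ((X : PC) ^ (v i) • b i) = (X : PC) ^ (v' (σ i)) • b' (σ i) := by
    intro i
    rw [map_smul, hφdef, Module.Basis.equiv_apply, show v i = v' (σ i) from congrFun hσ i]
  have hφR : Submodule.map (φ : Mt m →ₗ[PC] Mt m)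
      (Submodule.span PC (Set.range fun i => (X : PC) ^ (v i) • b i)) =
      Submodule.span PC (Set.range fun i => (X : PC) ^ (v' i) • b' i) := by
    rw [Submodule.map_span, ← Set.range_comp]
    congr 1
    have h1 : ((φ : Mt m →ₗ[PC] Mt m) ∘ fun i => (X : PC) ^ (v i) • b i) =
        (fun i => (X : PC) ^ (v' i) • b' i) ∘ σ := funext fun i => hφw i
    rw [h1, Function.Surjective.range_comp σ.surjective]
  have hφK : Submodule.map (φ : Mt m →ₗ[PC] Mt m) (LinearMap.ker (pr N m)) =
      LinearMap.ker (pr N m) := by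
    rw [ker_pr_eq]
    have hc : (φ : Mt m →ₗ[PC] Mt m) ∘ₗ LinearMap.lsmul PC (Mt m) ((X : PC) ^ N) =
        LinearMap.lsmul PC (Mt m) ((X : PC) ^ N) ∘ₗ (φ : Mt m →ₗ[PC] Mt m) := by
      refine LinearMap.ext fun x => ?_
      simp only [LinearMap.comp_apply, LinearMap.lsmul_apply, map_smul]
    rw [← Submodule.map_comp, hc, Submodule.map_comp]
    congr 1
    rw [Submodule.map_top, LinearEquiv.range]
  obtain ⟨g, hg⟩ := descend N m φ hφK
  have hmapR : Submodule.map (pr N m)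
      (Submodule.span PC (Set.range fun i => (X : PC) ^ (v i) • b i)) =
      R.restrictScalars PC := by
    rw [← hspan]
    exact Submodule.map_comap_eq_of_surjective (pr_surjective N m) _
  have hmapR' : Submodule.map (pr N m)
      (Submodule.span PC (Set.range fun i => (X : PC) ^ (v' i) • b' i)) =
      R'.restrictScalars PC := by
    rw [← hspan']
    exact Submodule.map_comap_eq_of_surjective (pr_surjective N m) _
  refine ⟨g, ?_⟩
  ext y
  simp only [Submodule.mem_map, LinearEquiv.coe_coe]
  constructor
  · rintro ⟨r, hr, rfl⟩
    have h1 : r ∈ R.restrictScalars PC := hr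
    rw [← hmapR] at h1
    obtain ⟨t, ht, rfl⟩ := h1
    rw [hg]
    have h2 : φ t ∈ Submodule.span PC (Set.range fun i => (X : PC) ^ (v' i) • b' i) := by
      rw [← hφR]
      exact Submodule.mem_map_of_mem ht
    have h3 := Submodule.mem_map_of_mem (f := pr N m) h2
    rw [hmapR'] at h3
    exact h3
  · intro hy
    have h1 : y ∈ R'.restrictScalars PC := hy
    rw [← hmapR', ← hφR] at h1
    obtain ⟨s, hs, rfl⟩ := h1
    obtain ⟨t, ht, rfl⟩ := hs
    refine ⟨pr N m t, ?_, hg t⟩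
    have h2 := Submodule.mem_map_of_mem (f := pr N m) ht
    rw [hmapR] at h2
    exact h2

end S16
end S16

theorem stmt16 (N m : ℕ) (hN : 1 ≤ N) (hm : 1 ≤ m)
    (R R' : Submodule (AN N) (Fin m → AN N)) :
    (∃ g : (Fin m → AN N) ≃ₗ[AN N] (Fin m → AN N),
        Submodule.map (g : (Fin m → AN N) →ₗ[AN N] (Fin m → AN N)) R = R') ↔
    Nonempty (↥R ≃ₗ[AN N] ↥R') := by
  constructor
  · rintro ⟨g, hg⟩
    exact ⟨(g.submoduleMap R).trans (LinearEquiv.ofEq _ _ hg)⟩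
  · rintro ⟨e⟩
    exact S16.exists_g N m R R' e
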